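/- Let f(z) = ∑_{k≥0} a_k z^k be a power series with null radius of convergence (limsup_{k→∞} |a_k|^{1/k} = ∞) and a_0 ≠ 0. Let (k_n)_{n∈ℕ} be the (infinite) increasing sequence of indices at which α_{k_n} = A_{k_n}, where α_m = |a_m|^{1/m} and A_m = max_{1≤j≤m} α_j. Then for every ε > 0 there exists N such that for all n ≥ N, every zero w of the polynomial z ↦ s_{k_n}(z/α_{k_n}) satisfies |a_0|/(1+|a_0|) ≤ |w| ≤ 2 + ε. -/

import Mathlib

open Filter Polynomial
open scoped Classical Real

/-- Dilcher–Rubel, localization of the zeros of the dominantly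
normalized sections. Let `∑ a_k z^k` have null radius of convergence, `a_0 ≠ 0`,
`α_m = |a_m|^{1/m}`, `A_m = max_{1 ≤ j ≤ m} α_j`, and let `(k_n)` be the increasing
sequence of all indices at which `α_{k_n} = A_{k_n}`. Then for every `ε > 0` and all
large `n`, every zero `w` of `s_{k_n}(z/α_{k_n})` satisfies
`|a_0|/(1+|a_0|) ≤ |w| ≤ 2 + ε`. -/
theorem stmt_10 (a : ℕ → ℂ) (α : ℕ → ℝ) (k : ℕ → ℕ) (Q : ℕ → Polynomial ℂ)
    (ha0 : a 0 ≠ 0)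
    (hα : ∀ m : ℕ, α m = ‖a m‖ ^ ((m : ℝ)⁻¹))
    (hrad : Filter.limsup (fun m : ℕ => ((α m : ℝ) : EReal)) Filter.atTop = ⊤)
    (hkmono : StrictMono k)
    (hkpos : ∀ n, 1 ≤ k n)
    (hkmax : ∀ n : ℕ, IsGreatest
      {x : ℝ | ∃ j : ℕ, 1 ≤ j ∧ j ≤ k n ∧ x = α j} (α (k n)))
    (hkall : ∀ m : ℕ, 1 ≤ m →
      IsGreatest {x : ℝ | ∃ j : ℕ, 1 ≤ j ∧ j ≤ m ∧ x = α j} (α m) → ∃ n, k n = m)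
    (hQ : ∀ m : ℕ, Q m = ∑ j ∈ Finset.range (m + 1),
      Polynomial.C (a j * ((α m : ℂ))⁻¹ ^ j) * Polynomial.X ^ j) :
    ∀ ε : ℝ, 0 < ε → ∃ N : ℕ, ∀ n : ℕ, N ≤ n →
      ∀ w ∈ (Q (k n)).roots,
        ‖a 0‖ / (1 + ‖a 0‖) ≤ ‖w‖ ∧
        ‖w‖ ≤ 2 + ε := by
  intro ε hε
  set c : ℝ := ‖a 0‖ with hc
  have hc0 : 0 < c := by
    simpa [hc] using (norm_pos_iff.2 ha0)
  obtain ⟨N, hNbig⟩ := pow_unbounded_of_one_lt (R := ℝ) (c * (1 + ε) / ε) one_lt_two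
  refine ⟨N, fun n hn w hw => ?_⟩
  obtain ⟨hQne, hroot⟩ := Polynomial.mem_roots'.1 hw
  have hmax : ∀ j, 1 ≤ j → j ≤ k n → α j ≤ α (k n) :=
    fun j h1 h2 => (hkmax n).2 ⟨j, h1, h2, rfl⟩
  have hm1 : 1 ≤ k n := hkpos n
  have hnk : n ≤ k n := hkmono.le_apply
  obtain ⟨m, hm⟩ : ∃ m, k n = m := ⟨_, rfl⟩
  rw [hm] at hmax hm1 hnk hroot
  obtain ⟨p, rfl⟩ : ∃ p, m = p + 1 := ⟨m - 1, (Nat.succ_pred_eq_of_pos hm1).symm⟩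
  have heval : ∑ j ∈ Finset.range (p + 1 + 1),
      a j * ((α (p + 1) : ℂ))⁻¹ ^ j * w ^ j = 0 := by
    have := hroot
    rw [hQ (p + 1)] at this
    simpa [Polynomial.IsRoot, Polynomial.eval_finset_sum] using this
  have hαnn : ∀ j, 0 ≤ α j := fun j => by
    rw [hα]; exact Real.rpow_nonneg (norm_nonneg _) _
  have hA0 : α (p + 1) ≠ 0 := by
    intro h0
    apply ha0
    have := heval
    rw [Finset.sum_range_succ'] at this
    simp only [h0, Complex.ofReal_zero, inv_zero] at this
    simpa using this
  have hApos : 0 < α (p + 1) := lt_of_le_of_ne (hαnn _) (Ne.symm hA0)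
  have habsj : ∀ j : ℕ, 1 ≤ j → ‖a j‖ = α j ^ j := by
    intro j hj
    have hjne : (j : ℝ) ≠ 0 := Nat.cast_ne_zero.2 (by omega)
    rw [hα j, ← Real.rpow_natCast (‖a j‖ ^ ((j : ℝ)⁻¹)) j,
      ← Real.rpow_mul (norm_nonneg _), inv_mul_cancel₀ hjne, Real.rpow_one]
  -- coefficient bound
  have hcoef : ∀ j : ℕ, 1 ≤ j → j ≤ p + 1 →
      ‖a j * ((α (p + 1) : ℂ))⁻¹ ^ j‖ ≤ 1 := by
    intro j hj1 hjm
    have hle : α j ≤ α (p + 1) := hmax j hj1 hjm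
    have heq : ‖a j * ((α (p + 1) : ℂ))⁻¹ ^ j‖ = (α j / α (p + 1)) ^ j := by
      rw [norm_mul, norm_pow, norm_inv, Complex.norm_real, Real.norm_eq_abs, abs_of_pos hApos,
        habsj j hj1, div_pow, div_eq_mul_inv, inv_pow]
    rw [heq]
    exact pow_le_one₀ (div_nonneg (hαnn j) (hαnn _)) ((div_le_one hApos).2 hle)
  have hcoefm : ‖a (p + 1) * ((α (p + 1) : ℂ))⁻¹ ^ (p + 1)‖ = 1 := by
    rw [norm_mul, norm_pow, norm_inv, Complex.norm_real, Real.norm_eq_abs, abs_of_pos hApos,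
      habsj (p + 1) (by omega), inv_pow, mul_inv_cancel₀ (pow_ne_zero _ hA0)]
  set W : ℝ := ‖w‖ with hW
  have hWnn : 0 ≤ W := norm_nonneg _
  constructor
  · -- lower bound
    by_contra hlt
    push_neg at hlt
    have hr1 : c / (1 + c) < 1 := by
      rw [div_lt_one (by linarith)]; linarith
    have hW1 : W < 1 := lt_trans hlt hr1
    have key : c ≤ ∑ i ∈ Finset.range (p + 1), W ^ (i + 1) := by
      rw [Finset.sum_range_succ'] at heval
      simp only [pow_zero, mul_one] at heval
      have h0 : a 0 = -∑ i ∈ Finset.range (p + 1),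
          a (i + 1) * ((α (p + 1) : ℂ))⁻¹ ^ (i + 1) * w ^ (i + 1) := by
        linear_combination heval
      calc c = ‖∑ i ∈ Finset.range (p + 1),
            a (i + 1) * ((α (p + 1) : ℂ))⁻¹ ^ (i + 1) * w ^ (i + 1)‖ := by
              rw [hc, h0, norm_neg]
        _ ≤ ∑ i ∈ Finset.range (p + 1), ‖a (i + 1) * ((α (p + 1) : ℂ))⁻¹ ^ (i + 1) * w ^ (i + 1)‖ :=
              norm_sum_le _ _
        _ ≤ ∑ i ∈ Finset.range (p + 1), W ^ (i + 1) := by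
              refine Finset.sum_le_sum fun i hi => ?_
              rw [norm_mul, norm_pow]
              have hb := hcoef (i + 1) (by omega)
                (by simp only [Finset.mem_range] at hi; omega)
              calc ‖a (i + 1) * ((α (p + 1) : ℂ))⁻¹ ^ (i + 1)‖ * W ^ (i + 1)
                  ≤ 1 * W ^ (i + 1) :=
                    mul_le_mul_of_nonneg_right hb (pow_nonneg hWnn _)
                _ = W ^ (i + 1) := one_mul _
    have hgeom : ∑ i ∈ Finset.range (p + 1), W ^ (i + 1) ≤ W / (1 - W) := by
      have h1 : ∑ i ∈ Finset.range (p + 1), W ^ (i + 1)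
          = W * ∑ i ∈ Finset.range (p + 1), W ^ i := by
        rw [Finset.mul_sum]; exact Finset.sum_congr rfl fun i _ => by ring
      have h2 : (1 - W) * ∑ i ∈ Finset.range (p + 1), W ^ i = 1 - W ^ (p + 1) := by
        have := geom_sum_mul W (p + 1)
        nlinarith [this]
      have h3 : ∑ i ∈ Finset.range (p + 1), W ^ i ≤ 1 / (1 - W) := by
        rw [le_div_iff₀ (by linarith)]
        nlinarith [pow_nonneg hWnn (p + 1)]
      rw [h1, div_eq_mul_one_div]
      exact mul_le_mul_of_nonneg_left h3 hWnn
    have hmono : W / (1 - W) < c := by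
      have hrc : (c / (1 + c)) / (1 - c / (1 + c)) = c := by
        field_simp
        ring
      rw [← hrc]
      apply div_lt_div₀ hlt _ (by nlinarith) (by linarith)
      · nlinarith
    linarith [key.trans hgeom]
  · -- upper bound
    by_contra hgt
    push_neg at hgt
    have hW2 : (2 : ℝ) < W := by linarith
    have hW1 : (1 : ℝ) < W := by linarith
    rw [Finset.sum_range_succ] at heval
    have htop : ‖a (p + 1) * ((α (p + 1) : ℂ))⁻¹ ^ (p + 1) * w ^ (p + 1)‖
        = W ^ (p + 1) := by
      rw [norm_mul, norm_pow, hcoefm, one_mul]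
    have key : W ^ (p + 1) ≤ c + ∑ i ∈ Finset.range p, W ^ (i + 1) := by
      have h0 : a (p + 1) * ((α (p + 1) : ℂ))⁻¹ ^ (p + 1) * w ^ (p + 1)
          = -∑ j ∈ Finset.range (p + 1), a j * ((α (p + 1) : ℂ))⁻¹ ^ j * w ^ j := by
        linear_combination heval
      calc W ^ (p + 1) = ‖∑ j ∈ Finset.range (p + 1),
            a j * ((α (p + 1) : ℂ))⁻¹ ^ j * w ^ j‖ := by rw [← htop, h0, norm_neg]
        _ ≤ ∑ j ∈ Finset.range (p + 1), ‖a j * ((α (p + 1) : ℂ))⁻¹ ^ j * w ^ j‖ :=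
              norm_sum_le _ _
        _ ≤ c + ∑ i ∈ Finset.range p, W ^ (i + 1) := by
            rw [Finset.sum_range_succ']
            rw [add_comm]
            gcongr with i hi
            · simp [hc]
            · rw [norm_mul, norm_pow]
              have hb := hcoef (i + 1) (by omega) (by
                simp only [Finset.mem_range] at hi; omega)
              calc ‖a (i + 1) * ((α (p + 1) : ℂ))⁻¹ ^ (i + 1)‖ * W ^ (i + 1)
                  ≤ 1 * W ^ (i + 1) :=
                    mul_le_mul_of_nonneg_right hb (pow_nonneg hWnn _)
                _ = W ^ (i + 1) := one_mul _
    have hgeom : ∑ i ∈ Finset.range p, W ^ (i + 1) ≤ W ^ (p + 1) / (1 + ε) := by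
      have h1 : ∑ i ∈ Finset.range p, W ^ (i + 1)
          = W * ∑ i ∈ Finset.range p, W ^ i := by
        rw [Finset.mul_sum]; exact Finset.sum_congr rfl fun i _ => by ring
      have h2 : (W - 1) * ∑ i ∈ Finset.range p, W ^ i = W ^ p - 1 :=
        mul_comm (W - 1) _ ▸ geom_sum_mul W p
      have h3 : ∑ i ∈ Finset.range p, W ^ i ≤ W ^ p / (W - 1) := by
        rw [le_div_iff₀ (by linarith)]
        nlinarith [h2]
      calc ∑ i ∈ Finset.range p, W ^ (i + 1) ≤ W * (W ^ p / (W - 1)) := by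
            rw [h1]; exact mul_le_mul_of_nonneg_left h3 (by linarith)
        _ = W ^ (p + 1) / (W - 1) := by ring
        _ ≤ W ^ (p + 1) / (1 + ε) := by
            apply div_le_div_of_nonneg_left (pow_nonneg hWnn _) (by linarith)
            linarith
    have hεp : (0 : ℝ) < 1 + ε := by linarith
    have hWm : W ^ (p + 1) ≤ c * (1 + ε) / ε := by
      have h : W ^ (p + 1) ≤ c + W ^ (p + 1) / (1 + ε) := by linarith [key, hgeom]
      rw [le_div_iff₀ hε]
      nlinarith [mul_le_mul_of_nonneg_right h hεp.le,
        div_mul_cancel₀ (W ^ (p + 1)) (ne_of_gt hεp)]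
    have h2m : (2 : ℝ) ^ N ≤ W ^ (p + 1) := by
      calc (2 : ℝ) ^ N ≤ (2 : ℝ) ^ (p + 1) := by
            apply pow_le_pow_right₀ one_le_two
            omega
        _ ≤ W ^ (p + 1) := pow_le_pow_left₀ (by norm_num) (by linarith) _
    linarith [hNbig, hWm, h2m]
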